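/- Let a > √3 and set c(a) = (9/8)(a + 1/a) and x₀ = (3/(2a))·√((a² - 3)/2). Then the set of critical points of F_a(x,y) = x² + y² + (1/9)(a·x² + y²/a - c(a))² is exactly the three-point set {(0,0), (x₀, 0), (-x₀, 0)}. -/

import Mathlib

/-- `F_a`, the Casimir `K` restricted to the light-cone paraboloid `{H_a(M,1) = 0}` of the
reduced Fefferman Hamiltonian, in the coordinates `(M₁, M₂) = (x, y)`. -/
noncomputable def Fa (a : ℝ) (p : ℝ × ℝ) : ℝ :=
  p.1 ^ 2 + p.2 ^ 2 + (1/9) * (a * p.1 ^ 2 + p.2 ^ 2 / a - (9/8) * (a + 1/a)) ^ 2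

open ContinuousLinearMap in
lemma Fa_deriv (a : ℝ) (p : ℝ × ℝ) :
    HasFDerivAt (Fa a)
      ((2*p.1 + 2/9*(a*p.1^2 + p.2^2/a - 9/8*(a+1/a))*(2*a*p.1)) • fst ℝ ℝ ℝ +
       (2*p.2 + 2/9*(a*p.1^2 + p.2^2/a - 9/8*(a+1/a))*(2*p.2/a)) • snd ℝ ℝ ℝ) p := by
  have hx : HasFDerivAt (fun q : ℝ × ℝ => q.1) (fst ℝ ℝ ℝ) p := hasFDerivAt_fst
  have hy : HasFDerivAt (fun q : ℝ × ℝ => q.2) (snd ℝ ℝ ℝ) p := hasFDerivAt_snd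
  have h1 := hx.mul hx
  have h2 := hy.mul hy
  have hQ := ((h1.const_mul a).add (h2.mul_const a⁻¹)).sub_const (9/8*(a+1/a))
  have key := (h1.add h2).add ((hQ.mul hQ).const_mul (1/9 : ℝ))
  have hFa : Fa a = fun q : ℝ × ℝ =>
      q.1 * q.1 + q.2 * q.2 +
        1/9 * ((a * (q.1 * q.1) + q.2 * q.2 * a⁻¹ - 9/8*(a+1/a)) *
          (a * (q.1 * q.1) + q.2 * q.2 * a⁻¹ - 9/8*(a+1/a))) := by
    funext q; simp only [Fa]; ring
  rw [hFa]
  refine key.congr_fderiv ?_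
  refine ContinuousLinearMap.ext fun v => ?_
  simp
  ring

open ContinuousLinearMap in
lemma fst_snd_zero {c1 c2 : ℝ} :
    c1 • fst ℝ ℝ ℝ + c2 • snd ℝ ℝ ℝ = 0 ↔ c1 = 0 ∧ c2 = 0 := by
  constructor
  · intro h
    constructor
    · have := congrFun (congrArg DFunLike.coe h) (1, 0); simpa using this
    · have := congrFun (congrArg DFunLike.coe h) (0, 1); simpa using this
  · rintro ⟨rfl, rfl⟩; simp

set_option maxHeartbeats 1000000 in
/-- For `a > √3` the critical points of `F_a` are exactly the origin and the two points
`(±x₀, 0)` with `x₀ = (3/(2a))·√((a² - 3)/2)`. -/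
theorem Fa_critical_points (a : ℝ) (ha : Real.sqrt 3 < a)
    (x₀ : ℝ) (hx₀ : x₀ = (3 / (2 * a)) * Real.sqrt ((a ^ 2 - 3) / 2)) :
    {p : ℝ × ℝ | fderiv ℝ (Fa a) p = 0} =
      {((0 : ℝ), (0 : ℝ)), (x₀, 0), (-x₀, 0)} := by
  have h3 : Real.sqrt 3 ^ 2 = 3 := Real.sq_sqrt (by norm_num)
  have ha0 : 0 < a := lt_of_le_of_lt (Real.sqrt_nonneg 3) ha
  have ha3 : 3 < a ^ 2 := by nlinarith [Real.sqrt_nonneg 3]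
  have hane : a ≠ 0 := ne_of_gt ha0
  have hx2 : 8 * a ^ 2 * x₀ ^ 2 = 9 * (a ^ 2 - 3) := by
    have hs : Real.sqrt ((a ^ 2 - 3) / 2) ^ 2 = (a ^ 2 - 3) / 2 :=
      Real.sq_sqrt (by nlinarith)
    rw [hx₀, mul_pow, hs]
    field_simp
    ring
  ext ⟨x, y⟩
  simp only [Set.mem_setOf_eq, Set.mem_insert_iff, Set.mem_singleton_iff, Prod.mk.injEq]
  rw [(Fa_deriv a (x, y)).fderiv, fst_snd_zero]
  constructor
  · rintro ⟨hDx, hDy⟩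
    simp only at hDx hDy
    have hy0 : y = 0 := by
      by_contra hy
      have h1 : y * (2 + 4/(9*a)*(a*x^2 + y^2/a - 9/8*(a+1/a))) = 0 := by
        field_simp at hDy ⊢
        linear_combination hDy
      have hfac := (mul_eq_zero.mp h1).resolve_left hy
      have hd : a*x^2 + y^2/a - 9/8*(a+1/a) = -(9*a)/2 := by
        field_simp at hfac ⊢
        linarith
      have hx0 : x = 0 := by
        have h2 : x * (2 - 2*a^2) = 0 := by
          linear_combination hDx - 4*a*x/9 * hd
        rcases mul_eq_zero.mp h2 with h | h
        · exact h
        · nlinarith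
      rw [hx0] at hd
      field_simp at hd
      nlinarith [sq_nonneg y]
    subst hy0
    have h1 : x * (2 + 4*a/9*(a*x^2 + 0^2/a - 9/8*(a+1/a))) = 0 := by
      linear_combination hDx
    rcases mul_eq_zero.mp h1 with h | h
    · exact Or.inl ⟨h, rfl⟩
    · have hxx : 8 * a ^ 2 * x ^ 2 = 9 * (a ^ 2 - 3) := by
        field_simp at h
        have h4a : (4:ℝ) * a ≠ 0 := by positivity
        exact mul_left_cancel₀ h4a (by linear_combination a * h)
      have h2 : (x - x₀) * (x + x₀) = 0 := by
        have h8 : (8 : ℝ) * a ^ 2 ≠ 0 := by positivity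
        have : 8 * a ^ 2 * ((x - x₀) * (x + x₀)) = 0 := by
          linear_combination hxx - hx2
        exact (mul_eq_zero.mp this).resolve_left h8
      rcases mul_eq_zero.mp h2 with h | h
      · exact Or.inr (Or.inl ⟨by linarith, rfl⟩)
      · exact Or.inr (Or.inr ⟨by linarith, rfl⟩)
  · have key : a * x₀ ^ 2 + 0 ^ 2 / a - 9/8*(a+1/a) = -(9/(2*a)) := by
      have h' : 8 * a ^ 3 * x₀ ^ 2 = 9 * a ^ 3 - 27 * a := by linear_combination a * hx2
      field_simp
      linarith [h']
    rintro (⟨rfl, rfl⟩ | ⟨rfl, rfl⟩ | ⟨rfl, rfl⟩) <;> constructor <;> simp only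
    · norm_num
    · norm_num
    · rw [key]; field_simp; ring
    · norm_num
    · have key' : a * (-x₀) ^ 2 + 0 ^ 2 / a - 9/8*(a+1/a) = -(9/(2*a)) := by
        rw [neg_pow]; simpa using key
      rw [key']; field_simp; ring
    · norm_num
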